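/- For a Hermitian matrix P with P² = I and θ ∈ ℝ, the identity e^{iθP} = (cos θ − sin θ)·I + (√2 sin θ)·e^{i(π/4)P} holds. -/

import Mathlib

open Complex Matrix

section Aux

variable {n : ℕ}

attribute [local instance] Matrix.linftyOpNormedRing Matrix.linftyOpNormedAlgebra

/-- The algebra hom `ℂ × ℂ → Matrix` sending `(a, b)` to
`((a+b)/2) • 1 + ((a-b)/2) • P`, for `P` with `P ^ 2 = 1`. -/
noncomputable def pauliHom (P : Matrix (Fin n) (Fin n) ℂ) (hP2 : P * P = 1) :
    ℂ × ℂ →ₐ[ℂ] Matrix (Fin n) (Fin n) ℂ where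
  toFun p := ((p.1 + p.2) / 2) • (1 : Matrix (Fin n) (Fin n) ℂ) + ((p.1 - p.2) / 2) • P
  map_one' := by norm_num
  map_mul' p q := by
    simp only [Prod.fst_mul, Prod.snd_mul, add_mul, mul_add, Matrix.smul_mul,
      Matrix.mul_smul, Matrix.one_mul, Matrix.mul_one, hP2, smul_smul]
    rw [show ((p.1 * q.1 + p.2 * q.2) / 2 : ℂ) =
        (p.1 + p.2) / 2 * ((q.1 + q.2) / 2) + (p.1 - p.2) / 2 * ((q.1 - q.2) / 2) by ring,
      show ((p.1 * q.1 - p.2 * q.2) / 2 : ℂ) =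
        (p.1 + p.2) / 2 * ((q.1 - q.2) / 2) + (p.1 - p.2) / 2 * ((q.1 + q.2) / 2) by ring,
      add_smul, add_smul]
    match_scalars <;> ring
  map_zero' := by norm_num
  map_add' p q := by
    simp only [Prod.fst_add, Prod.snd_add]
    rw [show ((p.1 + q.1 + (p.2 + q.2)) / 2 : ℂ) = (p.1 + p.2) / 2 + (q.1 + q.2) / 2 by ring,
      show ((p.1 + q.1 - (p.2 + q.2)) / 2 : ℂ) = (p.1 - p.2) / 2 + (q.1 - q.2) / 2 by ring,
      add_smul, add_smul]
    abel
  commutes' r := by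
    simp [Algebra.algebraMap_eq_smul_one]

theorem exp_smul_of_mul_self_eq_one (P : Matrix (Fin n) (Fin n) ℂ) (hP2 : P * P = 1) (c : ℂ) :
    NormedSpace.exp (c • P) =
      ((Complex.exp c + Complex.exp (-c)) / 2) • (1 : Matrix (Fin n) (Fin n) ℂ) +
        ((Complex.exp c - Complex.exp (-c)) / 2) • P := by
  have hφ : Continuous (pauliHom P hP2) := by
    show Continuous fun p : ℂ × ℂ =>
      ((p.1 + p.2) / 2) • (1 : Matrix (Fin n) (Fin n) ℂ) + ((p.1 - p.2) / 2) • P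
    fun_prop
  have hmap := NormedSpace.map_exp (pauliHom P hP2) hφ (c, -c)
  have hin : pauliHom P hP2 (c, -c) = c • P := by
    show ((c + -c) / 2) • (1 : Matrix (Fin n) (Fin n) ℂ) + ((c - -c) / 2) • P = c • P
    norm_num
  have hprod : NormedSpace.exp ((c, -c) : ℂ × ℂ) = (Complex.exp c, Complex.exp (-c)) := by
    ext
    · rw [Prod.fst_exp, Complex.exp_eq_exp_ℂ]
    · rw [Prod.snd_exp, Complex.exp_eq_exp_ℂ]
  rw [hin] at hmap
  refine hmap.symm.trans ?_
  rw [hprod]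
  rfl

theorem exp_real_mul_I_smul (P : Matrix (Fin n) (Fin n) ℂ) (hP2 : P * P = 1) (c : ℝ) :
    NormedSpace.exp (((c : ℂ) * Complex.I) • P) =
      ((Real.cos c : ℝ) : ℂ) • (1 : Matrix (Fin n) (Fin n) ℂ) +
        (((Real.sin c : ℝ) : ℂ) * Complex.I) • P := by
  rw [exp_smul_of_mul_self_eq_one P hP2]
  have e1 : Complex.exp ((c : ℂ) * Complex.I) = Complex.cos c + Complex.sin c * Complex.I :=
    Complex.exp_mul_I c
  have e2 : Complex.exp (-((c : ℂ) * Complex.I)) =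
      Complex.cos c - Complex.sin c * Complex.I := by
    rw [← neg_mul, Complex.exp_mul_I, Complex.cos_neg, Complex.sin_neg]
    ring
  rw [e1, e2, Complex.ofReal_cos, Complex.ofReal_sin]
  congr 1 <;> congr 1 <;> ring

end Aux

/-- The optimal Clifford decomposition of a Pauli rotation:
`e^{iθP} = (cos θ − sin θ)·I + (√2 sin θ)·e^{i(π/4)P}`. -/
theorem exp_theta_pauli_clifford_decomposition {n : ℕ} (P : Matrix (Fin n) (Fin n) ℂ)
    (hP : P.IsHermitian) (hP2 : P * P = 1) (θ : ℝ) :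
    NormedSpace.exp (((θ : ℂ) * Complex.I) • P) =
      ((Real.cos θ - Real.sin θ : ℝ) : ℂ) • (1 : Matrix (Fin n) (Fin n) ℂ) +
        ((Real.sqrt 2 * Real.sin θ : ℝ) : ℂ) •
          NormedSpace.exp ((((Real.pi / 4 : ℝ) : ℂ) * Complex.I) • P) := by
  rw [exp_real_mul_I_smul P hP2 θ, exp_real_mul_I_smul P hP2 (Real.pi / 4),
    Real.cos_pi_div_four, Real.sin_pi_div_four]
  have h2 : ((Real.sqrt 2 : ℝ) : ℂ) * ((Real.sqrt 2 : ℝ) : ℂ) = 2 := by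
    norm_cast
    exact Real.mul_self_sqrt (by norm_num)
  match_scalars
  · push_cast
    linear_combination -(Complex.sin (θ : ℂ)) / 2 * h2
  · push_cast
    linear_combination -(Complex.sin (θ : ℂ)) * Complex.I / 2 * h2
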